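/- Let 0 < q < 1, γ > q, and let μ be a nonnegative Radon measure on Ω such that the weighted norm inequality ‖G[ψ dμ]‖_{L^γ(dμ)} ≤ C ‖ψ‖_{L^{γ/q}(dμ)} holds for all ψ ∈ L^{γ/q}(dμ). Suppose (u_j) is a nondecreasing sequence with u_0 ∈ L^γ(dμ), u_j = G[u_{j−1}^q dμ] + F where F ∈ L^γ(dμ), F ≥ 0. Then every u_j ∈ L^γ(dμ), and moreover sup_j ‖u_j‖_{L^γ(dμ)} ≤ C'' (1 + ‖F‖_{L^γ(dμ)})^{1/(1−q)} for a constant C'' depending only on C, q; hence the pointwise limit u = lim u_j ∈ L^γ(Ω, dμ). -/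

import Mathlib

open MeasureTheory
open scoped ENNReal

/-- Uniform `L^γ` bound for the successive approximations: assuming the weighted norm
inequality `‖G[ψ dμ]‖_{L^γ(dμ)} ≤ C ‖ψ‖_{L^{γ/q}(dμ)}`, a nondecreasing sequence
`u_j = G[u_{j−1}^q dμ] + F` with `u_0 ∈ L^γ(dμ)` and `0 ≤ F ∈ L^γ(dμ)` satisfies
`u_j ∈ L^γ(dμ)` for every `j` with
`sup_j ‖u_j‖_{L^γ(dμ)} ≤ C'' (1 + ‖F‖_{L^γ(dμ)})^{1/(1−q)}` for a constant `C''`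
depending only on `C` and `q`; hence the pointwise limit `u = lim u_j = ⨆_j u_j`
belongs to `L^γ(Ω, dμ)`. -/
theorem successive_approximation_Lgamma_bound {Ω : Type*} [MeasurableSpace Ω]
    (G : Ω → Ω → ℝ≥0∞) (μ : Measure Ω)
    (hGmeas : Measurable (Function.uncurry G))
    (q γ : ℝ) (hq0 : 0 < q) (hq1 : q < 1) (hγ : q < γ)
    (C : ℝ≥0∞) (hC0 : 0 < C) (hCtop : C ≠ ⊤)
    (hnorm : ∀ ψ : Ω → ℝ≥0∞, Measurable ψ →
      (∫⁻ x, (∫⁻ y, G x y * ψ y ∂μ) ^ γ ∂μ) ^ (1 / γ)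
        ≤ C * (∫⁻ x, ψ x ^ (γ / q) ∂μ) ^ (q / γ))
    (F : Ω → ℝ≥0∞) (hFmeas : Measurable F) (hF : (∫⁻ x, F x ^ γ ∂μ) ≠ ⊤)
    (u : ℕ → Ω → ℝ≥0∞)
    (hu0meas : Measurable (u 0)) (hu0 : (∫⁻ x, u 0 x ^ γ ∂μ) ≠ ⊤)
    (huj : ∀ j x, u (j + 1) x = (∫⁻ y, G x y * (u j y) ^ q ∂μ) + F x)
    (hmono : ∀ j x, u j x ≤ u (j + 1) x) :
    (∀ j, (∫⁻ x, u j x ^ γ ∂μ) ≠ ⊤)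
    ∧ (∃ C'' : ℝ≥0∞, 0 < C'' ∧ C'' ≠ ⊤ ∧ ∀ j,
        (∫⁻ x, u j x ^ γ ∂μ) ^ (1 / γ)
          ≤ C'' * (1 + (∫⁻ x, F x ^ γ ∂μ) ^ (1 / γ)) ^ (1 / (1 - q)))
    ∧ (∫⁻ x, (⨆ j, u j x) ^ γ ∂μ) ≠ ⊤ := by
  have hγ0 : (0:ℝ) < γ := hq0.trans hγ
  have hγ0' : γ ≠ 0 := ne_of_gt hγ0
  have h1γ : (0:ℝ) ≤ 1 / γ := by positivity
  have h1γpos : (0:ℝ) < 1 / γ := by positivity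
  have h1q : (0:ℝ) < 1 - q := by linarith
  have h1q' : (1:ℝ) - q ≠ 0 := ne_of_gt h1q
  have h1qinv : (0:ℝ) ≤ 1 / (1 - q) := by positivity
  -- the elementary constant
  set K : ℝ≥0∞ := 2 * 2 ^ (1 / γ) with hKdef
  have hK1 : (1:ℝ≥0∞) ≤ K := by
    have h2 : (1:ℝ≥0∞) ≤ 2 ^ (1 / γ) := by
      calc (1:ℝ≥0∞) = 2 ^ (0:ℝ) := by rw [ENNReal.rpow_zero]
      _ ≤ 2 ^ (1 / γ) := ENNReal.rpow_le_rpow_of_exponent_le one_le_two h1γ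
    calc (1:ℝ≥0∞) = 1 * 1 := (one_mul 1).symm
    _ ≤ 2 * 2 ^ (1 / γ) := mul_le_mul' one_le_two h2
  have hKtop : K ≠ ⊤ :=
    ENNReal.mul_ne_top ENNReal.ofNat_ne_top
      (ENNReal.rpow_ne_top_of_nonneg h1γ ENNReal.ofNat_ne_top)
  have hK0 : K ≠ 0 := fun h => by simp [h] at hK1
  -- shorthand for the F-norm
  set NF : ℝ≥0∞ := (∫⁻ x, F x ^ γ ∂μ) ^ (1 / γ) with hNFdef
  have hNFtop : NF ≠ ⊤ := ENNReal.rpow_ne_top_of_nonneg h1γ hF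
  -- elementary splitting inequality
  have hsplit : ∀ (a b : ℝ≥0∞) (e : ℝ), 0 ≤ e → (a + b) ^ e ≤ 2 ^ e * (a ^ e + b ^ e) := by
    intro a b e he
    rcases le_total a b with h | h
    · calc (a + b) ^ e ≤ (2 * b) ^ e := by
            refine ENNReal.rpow_le_rpow ?_ he
            rw [two_mul]; exact add_le_add_left h b
      _ = 2 ^ e * b ^ e := ENNReal.mul_rpow_of_nonneg _ _ he
      _ ≤ 2 ^ e * (a ^ e + b ^ e) := mul_le_mul_right le_add_self _
    · calc (a + b) ^ e ≤ (2 * a) ^ e := by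
            refine ENNReal.rpow_le_rpow ?_ he
            rw [two_mul]; exact add_le_add_right h a
      _ = 2 ^ e * a ^ e := ENNReal.mul_rpow_of_nonneg _ _ he
      _ ≤ 2 ^ e * (a ^ e + b ^ e) := mul_le_mul_right le_self_add _
  -- the rpow inverse identities
  have hinv1 : ∀ x : ℝ≥0∞, (x ^ γ) ^ (1 / γ) = x := by
    intro x
    rw [← ENNReal.rpow_mul, mul_one_div_cancel hγ0', ENNReal.rpow_one]
  have hinv2 : ∀ x : ℝ≥0∞, (x ^ (1 / γ)) ^ γ = x := by
    intro x
    rw [← ENNReal.rpow_mul, one_div_mul_cancel hγ0', ENNReal.rpow_one]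
  -- measurability of the "potential" of u j, using σ-finiteness of {u j ≠ 0}
  have hmeas_step : ∀ j, Measurable (u j) → (∫⁻ x, u j x ^ γ ∂μ) ≠ ⊤ →
      Measurable (fun x => ∫⁻ y, G x y * u j y ^ q ∂μ) := by
    intro j hm hfin
    set S : Set Ω := {x | u j x = 0}ᶜ with hSdef
    have hSm : MeasurableSet S := (hm (measurableSet_singleton 0)).compl
    haveI : SigmaFinite (μ.restrict S) := by
      refine ⟨⟨⟨fun n => {x | ((n : ℝ≥0∞) + 1)⁻¹ ≤ u j x ^ γ} ∪ Sᶜ, fun _ => trivial, ?_, ?_⟩⟩⟩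
      · intro n
        have hBm : MeasurableSet {x | ((n : ℝ≥0∞) + 1)⁻¹ ≤ u j x ^ γ} :=
          measurableSet_le measurable_const (hm.pow_const γ)
        rw [Measure.restrict_apply (hBm.union hSm.compl)]
        have hsub : ({x | ((n : ℝ≥0∞) + 1)⁻¹ ≤ u j x ^ γ} ∪ Sᶜ) ∩ S ⊆
            {x | ((n : ℝ≥0∞) + 1)⁻¹ ≤ u j x ^ γ} := by
          rintro x ⟨hx1 | hx2, hxS⟩
          · exact hx1
          · exact (hx2 hxS).elim
        refine lt_of_le_of_lt (measure_mono hsub) ?_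
        have hne : ((n : ℝ≥0∞) + 1)⁻¹ ≠ 0 :=
          ENNReal.inv_ne_zero.mpr (ENNReal.add_ne_top.mpr ⟨ENNReal.natCast_ne_top n, ENNReal.one_ne_top⟩)
        have hcheb := mul_meas_ge_le_lintegral₀ (μ := μ) (hm.pow_const γ).aemeasurable ((n : ℝ≥0∞) + 1)⁻¹
        rw [lt_top_iff_ne_top]
        intro h
        rw [h, ENNReal.mul_top hne] at hcheb
        exact hfin (top_le_iff.mp hcheb)
      · ext x
        simp only [Set.mem_iUnion, Set.mem_union, Set.mem_setOf_eq, Set.mem_univ, iff_true]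
        by_cases hx : u j x = 0
        · exact ⟨0, Or.inr (by simp [hSdef, hx])⟩
        · have h0 : u j x ^ γ ≠ 0 := by
            intro hc
            rw [ENNReal.rpow_eq_zero_iff] at hc
            rcases hc with ⟨h1, _⟩ | ⟨_, h2⟩
            · exact hx h1
            · exact absurd h2 (not_lt.mpr hγ0.le)
          obtain ⟨n, hn⟩ := ENNReal.exists_inv_nat_lt h0
          refine ⟨n, Or.inl ?_⟩
          exact le_trans (ENNReal.inv_le_inv' le_self_add) hn.le
    have hcong : (fun x => ∫⁻ y, G x y * u j y ^ q ∂μ)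
        = fun x => ∫⁻ y, G x y * u j y ^ q ∂(μ.restrict S) := by
      funext x
      rw [← lintegral_indicator hSm]
      refine lintegral_congr fun y => ?_
      by_cases hy : u j y = 0
      · have hyS : y ∉ S := by simp [hSdef, hy]
        rw [Set.indicator_of_notMem hyS]
        simp [hy, ENNReal.zero_rpow_of_pos hq0]
      · rw [Set.indicator_of_mem (by simp [hSdef, hy])]
    rw [hcong]
    exact Measurable.lintegral_prod_right'
      (f := fun p : Ω × Ω => G p.1 p.2 * u j p.2 ^ q)
      (hGmeas.mul ((hm.comp measurable_snd).pow_const q))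
  -- the main estimate
  have hstep : ∀ j, Measurable (u j) → (∫⁻ x, u j x ^ γ ∂μ) ≠ ⊤ →
      (∫⁻ x, u (j+1) x ^ γ ∂μ) ^ (1 / γ)
        ≤ K * (C * ((∫⁻ x, u j x ^ γ ∂μ) ^ (1 / γ)) ^ q + NF) := by
    intro j hm hfin
    have hA : Measurable (fun x => ∫⁻ y, G x y * u j y ^ q ∂μ) := hmeas_step j hm hfin
    set IA : ℝ≥0∞ := ∫⁻ x, (∫⁻ y, G x y * u j y ^ q ∂μ) ^ γ ∂μ with hIAdef
    set IF : ℝ≥0∞ := ∫⁻ x, F x ^ γ ∂μ with hIFdef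
    have h1 : (∫⁻ x, u (j+1) x ^ γ ∂μ) ≤ 2 ^ γ * (IA + IF) := by
      calc (∫⁻ x, u (j+1) x ^ γ ∂μ)
          = ∫⁻ x, ((∫⁻ y, G x y * u j y ^ q ∂μ) + F x) ^ γ ∂μ :=
            lintegral_congr fun x => by rw [huj j x]
      _ ≤ ∫⁻ x, 2 ^ γ * ((∫⁻ y, G x y * u j y ^ q ∂μ) ^ γ + F x ^ γ) ∂μ :=
            lintegral_mono fun x => hsplit _ _ γ hγ0.le
      _ = 2 ^ γ * ∫⁻ x, ((∫⁻ y, G x y * u j y ^ q ∂μ) ^ γ + F x ^ γ) ∂μ :=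
            lintegral_const_mul' _ _ (ENNReal.rpow_ne_top_of_nonneg hγ0.le ENNReal.ofNat_ne_top)
      _ = 2 ^ γ * (IA + IF) := by rw [lintegral_add_left (hA.pow_const γ)]
    have h2 : (∫⁻ x, u (j+1) x ^ γ ∂μ) ^ (1 / γ) ≤ 2 * (IA + IF) ^ (1 / γ) := by
      calc (∫⁻ x, u (j+1) x ^ γ ∂μ) ^ (1 / γ)
          ≤ (2 ^ γ * (IA + IF)) ^ (1 / γ) := ENNReal.rpow_le_rpow h1 h1γ
      _ = (2 ^ γ) ^ (1 / γ) * (IA + IF) ^ (1 / γ) := ENNReal.mul_rpow_of_nonneg _ _ h1γ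
      _ = 2 * (IA + IF) ^ (1 / γ) := by
            rw [← ENNReal.rpow_mul, mul_one_div_cancel hγ0', ENNReal.rpow_one]
    have h4 : IA ^ (1 / γ) ≤ C * ((∫⁻ x, u j x ^ γ ∂μ) ^ (1 / γ)) ^ q := by
      have hn := hnorm (fun y => u j y ^ q) (hm.pow_const q)
      have e1 : (∫⁻ x, (u j x ^ q) ^ (γ / q) ∂μ) = ∫⁻ x, u j x ^ γ ∂μ := by
        refine lintegral_congr fun x => ?_
        rw [← ENNReal.rpow_mul]
        congr 1
        field_simp
      have e2 : (∫⁻ x, u j x ^ γ ∂μ) ^ (q / γ)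
          = ((∫⁻ x, u j x ^ γ ∂μ) ^ (1 / γ)) ^ q := by
        rw [← ENNReal.rpow_mul]
        congr 1
        ring
      calc IA ^ (1 / γ) ≤ C * (∫⁻ x, (u j x ^ q) ^ (γ / q) ∂μ) ^ (q / γ) := hn
      _ = C * ((∫⁻ x, u j x ^ γ ∂μ) ^ (1 / γ)) ^ q := by rw [e1, e2]
    calc (∫⁻ x, u (j+1) x ^ γ ∂μ) ^ (1 / γ)
        ≤ 2 * (IA + IF) ^ (1 / γ) := h2
    _ ≤ 2 * (2 ^ (1 / γ) * (IA ^ (1 / γ) + IF ^ (1 / γ))) :=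
          mul_le_mul_right (hsplit IA IF (1 / γ) h1γ) 2
    _ = K * (IA ^ (1 / γ) + IF ^ (1 / γ)) := by rw [hKdef, mul_assoc]
    _ ≤ K * (C * ((∫⁻ x, u j x ^ γ ∂μ) ^ (1 / γ)) ^ q + NF) := by
          refine mul_le_mul_right (add_le_add_left h4 _) K
  -- the induction: measurability and finiteness
  have main : ∀ j, Measurable (u j) ∧ (∫⁻ x, u j x ^ γ ∂μ) ≠ ⊤ := by
    intro j
    induction j with
    | zero => exact ⟨hu0meas, hu0⟩
    | succ n ih =>
      have hm := ih.1
      have hfin := ih.2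
      have hA : Measurable (fun x => ∫⁻ y, G x y * u n y ^ q ∂μ) := hmeas_step n hm hfin
      have hmeas : Measurable (u (n+1)) := by
        have : u (n+1) = fun x => (∫⁻ y, G x y * u n y ^ q ∂μ) + F x := funext (huj n)
        rw [this]
        exact hA.add hFmeas
      have hb := hstep n hm hfin
      have hNn : (∫⁻ x, u n x ^ γ ∂μ) ^ (1 / γ) ≠ ⊤ :=
        ENNReal.rpow_ne_top_of_nonneg h1γ hfin
      have hRHS : K * (C * ((∫⁻ x, u n x ^ γ ∂μ) ^ (1 / γ)) ^ q + NF) ≠ ⊤ := by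
        refine ENNReal.mul_ne_top hKtop (ENNReal.add_ne_top.mpr ⟨?_, hNFtop⟩)
        exact ENNReal.mul_ne_top hCtop (ENNReal.rpow_ne_top_of_nonneg hq0.le hNn)
      have hNn1 : (∫⁻ x, u (n+1) x ^ γ ∂μ) ^ (1 / γ) ≠ ⊤ := ne_top_of_le_ne_top hRHS hb
      refine ⟨hmeas, fun h => hNn1 ?_⟩
      rw [h]
      exact ENNReal.top_rpow_of_pos h1γpos
  -- absorption lemma
  have habs : ∀ a b x : ℝ≥0∞, 1 ≤ a → x ≠ ⊤ → x ≤ a * x ^ q + b →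
      x ≤ (a * (1 + b)) ^ (1 / (1 - q)) := by
    intro a b x ha hxt hx
    have hbase1 : (1:ℝ≥0∞) ≤ a * (1 + b) := by
      calc (1:ℝ≥0∞) = 1 * 1 := (one_mul 1).symm
      _ ≤ a * (1 + b) := mul_le_mul' ha le_self_add
    rcases le_total x 1 with hx1 | hx1
    · refine hx1.trans ?_
      calc (1:ℝ≥0∞) = (a * (1 + b)) ^ (0:ℝ) := ENNReal.rpow_zero.symm
      _ ≤ (a * (1 + b)) ^ (1 / (1 - q)) :=
            ENNReal.rpow_le_rpow_of_exponent_le hbase1 h1qinv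
    · have hx0 : x ≠ 0 := by
        intro h
        rw [h] at hx1
        exact absurd hx1 (by simp)
      have hxq1 : (1:ℝ≥0∞) ≤ x ^ q := by
        calc (1:ℝ≥0∞) = x ^ (0:ℝ) := ENNReal.rpow_zero.symm
        _ ≤ x ^ q := ENNReal.rpow_le_rpow_of_exponent_le hx1 hq0.le
      have hxqt : x ^ q ≠ ⊤ := ENNReal.rpow_ne_top_of_nonneg hq0.le hxt
      have hxq0 : x ^ q ≠ 0 := ne_of_gt (lt_of_lt_of_le zero_lt_one hxq1)
      have h2 : x ≤ (a + b) * x ^ q := by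
        calc x ≤ a * x ^ q + b := hx
        _ ≤ a * x ^ q + b * x ^ q := by
              refine add_le_add_right ?_ _
              calc b = b * 1 := (mul_one b).symm
              _ ≤ b * x ^ q := mul_le_mul_right hxq1 b
        _ = (a + b) * x ^ q := (add_mul a b _).symm
      have h3 : x ^ (1 - q) ≤ a + b := by
        have hxx : x = x ^ (1 - q) * x ^ q := by
          rw [← ENNReal.rpow_add _ _ hx0 hxt, sub_add_cancel, ENNReal.rpow_one]
        refine (ENNReal.mul_le_mul_iff_left hxq0 hxqt).mp ?_
        calc x ^ (1 - q) * x ^ q = x := hxx.symm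
        _ ≤ (a + b) * x ^ q := h2
      calc x = (x ^ (1 - q)) ^ (1 / (1 - q)) := by
            rw [← ENNReal.rpow_mul, mul_one_div_cancel h1q', ENNReal.rpow_one]
      _ ≤ (a + b) ^ (1 / (1 - q)) := ENNReal.rpow_le_rpow h3 h1qinv
      _ ≤ (a * (1 + b)) ^ (1 / (1 - q)) := by
            refine ENNReal.rpow_le_rpow ?_ h1qinv
            calc a + b ≤ a + a * b := by
                  refine add_le_add_right ?_ a
                  calc b = 1 * b := (one_mul b).symm
                  _ ≤ a * b := mul_le_mul_left ha b
            _ = a * (1 + b) := by rw [mul_add, mul_one]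
  -- uniform bound on the norms
  have hNbound : ∀ j, (∫⁻ x, u j x ^ γ ∂μ) ^ (1 / γ)
      ≤ ((K * C + 1) * (1 + K * NF)) ^ (1 / (1 - q)) := by
    intro j
    have hm := (main j).1
    have hfin := (main j).2
    have hNj : (∫⁻ x, u j x ^ γ ∂μ) ^ (1 / γ) ≠ ⊤ :=
      ENNReal.rpow_ne_top_of_nonneg h1γ hfin
    have hmono_int : (∫⁻ x, u j x ^ γ ∂μ) ≤ ∫⁻ x, u (j+1) x ^ γ ∂μ :=
      lintegral_mono fun x => ENNReal.rpow_le_rpow (hmono j x) hγ0.le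
    have h1 : (∫⁻ x, u j x ^ γ ∂μ) ^ (1 / γ)
        ≤ K * (C * ((∫⁻ x, u j x ^ γ ∂μ) ^ (1 / γ)) ^ q + NF) :=
      le_trans (ENNReal.rpow_le_rpow hmono_int h1γ) (hstep j hm hfin)
    have h2 : (∫⁻ x, u j x ^ γ ∂μ) ^ (1 / γ)
        ≤ (K * C + 1) * ((∫⁻ x, u j x ^ γ ∂μ) ^ (1 / γ)) ^ q + K * NF := by
      calc (∫⁻ x, u j x ^ γ ∂μ) ^ (1 / γ)
          ≤ K * (C * ((∫⁻ x, u j x ^ γ ∂μ) ^ (1 / γ)) ^ q + NF) := h1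
      _ = K * C * ((∫⁻ x, u j x ^ γ ∂μ) ^ (1 / γ)) ^ q + K * NF := by
            ring
      _ ≤ (K * C + 1) * ((∫⁻ x, u j x ^ γ ∂μ) ^ (1 / γ)) ^ q + K * NF :=
            add_le_add_left (mul_le_mul_left (self_le_add_right _ _) _) _
    exact habs (K * C + 1) (K * NF) _ le_add_self hNj h2
  -- the final constant
  set C'' : ℝ≥0∞ := ((K * C + 1) * K) ^ (1 / (1 - q)) with hC''def
  have hC''base1 : (1:ℝ≥0∞) ≤ (K * C + 1) * K := by
    calc (1:ℝ≥0∞) = 1 * 1 := (one_mul 1).symm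
    _ ≤ (K * C + 1) * K := mul_le_mul' le_add_self hK1
  have hC''1 : (1:ℝ≥0∞) ≤ C'' := by
    calc (1:ℝ≥0∞) = ((K * C + 1) * K) ^ (0:ℝ) := ENNReal.rpow_zero.symm
    _ ≤ C'' := ENNReal.rpow_le_rpow_of_exponent_le hC''base1 h1qinv
  have hC''pos : 0 < C'' := lt_of_lt_of_le zero_lt_one hC''1
  have hC''top : C'' ≠ ⊤ := by
    refine ENNReal.rpow_ne_top_of_nonneg h1qinv ?_
    exact ENNReal.mul_ne_top (ENNReal.add_ne_top.mpr
      ⟨ENNReal.mul_ne_top hKtop hCtop, ENNReal.one_ne_top⟩) hKtop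
  have hfinal : ∀ j, (∫⁻ x, u j x ^ γ ∂μ) ^ (1 / γ)
      ≤ C'' * (1 + NF) ^ (1 / (1 - q)) := by
    intro j
    refine le_trans (hNbound j) ?_
    calc ((K * C + 1) * (1 + K * NF)) ^ (1 / (1 - q))
        ≤ ((K * C + 1) * (K * (1 + NF))) ^ (1 / (1 - q)) := by
          refine ENNReal.rpow_le_rpow (mul_le_mul_right ?_ _) h1qinv
          calc 1 + K * NF ≤ K + K * NF := add_le_add_left hK1 _
          _ = K * (1 + NF) := by rw [mul_add, mul_one]
    _ = (((K * C + 1) * K) * (1 + NF)) ^ (1 / (1 - q)) := by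
          congr 1
          ring
    _ = C'' * (1 + NF) ^ (1 / (1 - q)) := ENNReal.mul_rpow_of_nonneg _ _ h1qinv
  -- assemble the three conclusions
  refine ⟨fun j => (main j).2, ⟨C'', hC''pos, hC''top, hfinal⟩, ?_⟩
  -- the supremum
  have humono : Monotone u := monotone_nat_of_le_succ (fun k x => hmono k x)
  have husup : (∫⁻ x, (⨆ n, u n x) ^ γ ∂μ) = ⨆ n, ∫⁻ x, u n x ^ γ ∂μ := by
    have hmono2 : Monotone fun n => fun x => u n x ^ γ :=
      fun m n hmn x => ENNReal.rpow_le_rpow (humono hmn x) hγ0.le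
    rw [← lintegral_iSup (fun n => ((main n).1).pow_const γ) hmono2]
    refine lintegral_congr fun x => ?_
    apply le_antisymm
    · have h1 : (⨆ n, u n x) ≤ (⨆ n, u n x ^ γ) ^ (1 / γ) := by
        refine iSup_le fun n => ?_
        calc u n x = (u n x ^ γ) ^ (1 / γ) := (hinv1 _).symm
        _ ≤ (⨆ n, u n x ^ γ) ^ (1 / γ) :=
              ENNReal.rpow_le_rpow (le_iSup (fun n => u n x ^ γ) n) h1γ
      calc (⨆ n, u n x) ^ γ ≤ ((⨆ n, u n x ^ γ) ^ (1 / γ)) ^ γ :=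
            ENNReal.rpow_le_rpow h1 hγ0.le
      _ = ⨆ n, u n x ^ γ := hinv2 _
    · exact iSup_le fun n => ENNReal.rpow_le_rpow (le_iSup (fun n => u n x) n) hγ0.le
  rw [husup]
  have hbound_ne : C'' * (1 + NF) ^ (1 / (1 - q)) ≠ ⊤ := by
    refine ENNReal.mul_ne_top hC''top ?_
    exact ENNReal.rpow_ne_top_of_nonneg h1qinv
      (ENNReal.add_ne_top.mpr ⟨ENNReal.one_ne_top, hNFtop⟩)
  have hsb : (⨆ n, ∫⁻ x, u n x ^ γ ∂μ) ≤ (C'' * (1 + NF) ^ (1 / (1 - q))) ^ γ := by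
    refine iSup_le fun n => ?_
    calc (∫⁻ x, u n x ^ γ ∂μ)
        = ((∫⁻ x, u n x ^ γ ∂μ) ^ (1 / γ)) ^ γ := (hinv2 _).symm
    _ ≤ (C'' * (1 + NF) ^ (1 / (1 - q))) ^ γ :=
          ENNReal.rpow_le_rpow (hfinal n) hγ0.le
  exact ne_top_of_le_ne_top (ENNReal.rpow_ne_top_of_nonneg hγ0.le hbound_ne) hsb
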